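/- Let H(z;u,v) be a formal power series in z with coefficients in ℚ[u,v] that is symmetric in u and v, and let Λ act on the variable u by ΛH(z;u,v) = (1+u)(1+zu)(H(z;u,v)−H(z;0,v))/u. Then ΛH(z;u,v) is symmetric in u and v if and only if H satisfies H(u,v) = [u(1+v)(1+zv)H(u,0) − v(1+u)(1+zu)H(v,0)] / [(u−v)(1−zuv)]. Moreover, if H satisfies this relation then so does ΛH. -/

import Mathlib

open PowerSeries

noncomputable section

abbrev M := MvPolynomial (Fin 2) ℚ

/-- u -/
def u : M := MvPolynomial.X 0
/-- v -/
def v : M := MvPolynomial.X 1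

/-- Exchange of the variables u and v, extended to power series in z. -/
def swapUV : PowerSeries M → PowerSeries M :=
  PowerSeries.map (MvPolynomial.rename (Equiv.swap (0 : Fin 2) 1)).toRingHom

/-- Substitution u := 0 (keeping v), extended to power series in z:  H(z;u,v) ↦ H(z;0,v). -/
def subU0 : PowerSeries M → PowerSeries M :=
  PowerSeries.map (MvPolynomial.aeval fun i : Fin 2 =>
    if i = 0 then (0 : M) else MvPolynomial.X 1).toRingHom

/-- Substitution v := 0 (keeping u):  H(z;u,v) ↦ H(z;u,0). -/
def subV0 : PowerSeries M → PowerSeries M :=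
  PowerSeries.map (MvPolynomial.aeval fun i : Fin 2 =>
    if i = 0 then MvPolynomial.X 0 else (0 : M)).toRingHom

/-- Substitution (u,v) := (v,0):  H(z;u,v) ↦ H(z;v,0). -/
def subV0' : PowerSeries M → PowerSeries M :=
  PowerSeries.map (MvPolynomial.aeval fun i : Fin 2 =>
    if i = 0 then MvPolynomial.X 1 else (0 : M)).toRingHom

/-- The relation H(u,v) = [u(1+v)(1+zv)H(u,0) − v(1+u)(1+zu)H(v,0)] / [(u−v)(1−zuv)],
stated with denominators cleared. -/
def SymRel (H : PowerSeries M) : Prop :=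
  PowerSeries.C (R := M) (u - v) * (1 - PowerSeries.X * PowerSeries.C (R := M) (u*v)) * H
    = PowerSeries.C (R := M) u * PowerSeries.C (R := M) (1 + v) * (1 + PowerSeries.X * PowerSeries.C (R := M) v) *
        subV0 H
      - PowerSeries.C (R := M) v * PowerSeries.C (R := M) (1 + u) * (1 + PowerSeries.X * PowerSeries.C (R := M) u) *
        subV0' H

namespace LamAux

def fsw : M →+* M := (MvPolynomial.rename (Equiv.swap (0 : Fin 2) 1)).toRingHom
def fu0 : M →+* M := (MvPolynomial.aeval fun i : Fin 2 =>
    if i = 0 then (0 : M) else MvPolynomial.X 1).toRingHom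
def fv0 : M →+* M := (MvPolynomial.aeval fun i : Fin 2 =>
    if i = 0 then MvPolynomial.X 0 else (0 : M)).toRingHom
def fv0' : M →+* M := (MvPolynomial.aeval fun i : Fin 2 =>
    if i = 0 then MvPolynomial.X 1 else (0 : M)).toRingHom

lemma comp1 : fv0'.comp fsw = fu0 := by
  apply MvPolynomial.ringHom_ext
  · intro q; simp [fsw, fu0, fv0']
  · intro i; fin_cases i <;> simp [fsw, fu0, fv0']

lemma comp2 : fsw.comp fv0' = fv0 := by
  apply MvPolynomial.ringHom_ext
  · intro q; simp [fsw, fv0, fv0']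
  · intro i; fin_cases i <;> simp [fsw, fv0, fv0']

lemma comp3 : fv0.comp fv0' = fv0'.comp fv0' := by
  apply MvPolynomial.ringHom_ext
  · intro q; simp [fv0, fv0']
  · intro i; fin_cases i <;> simp [fv0, fv0']

lemma s1 (H : PowerSeries M) : subU0 H = subV0' (swapUV H) :=
  (congrArg (fun f : M →+* M => PowerSeries.map f H) comp1).symm

lemma s2 (H : PowerSeries M) : swapUV (subV0' H) = subV0 H :=
  congrArg (fun f : M →+* M => PowerSeries.map f H) comp2

lemma s3 (H : PowerSeries M) : subV0 (subV0' H) = subV0' (subV0' H) :=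
  congrArg (fun f : M →+* M => PowerSeries.map f H) comp3

-- structural simp lemmas for the three maps
lemma swap_mul (a b : PowerSeries M) : swapUV (a * b) = swapUV a * swapUV b := map_mul _ a b
lemma swap_sub (a b : PowerSeries M) : swapUV (a - b) = swapUV a - swapUV b := map_sub _ a b
lemma swap_add (a b : PowerSeries M) : swapUV (a + b) = swapUV a + swapUV b := map_add _ a b
lemma swap_one : swapUV 1 = 1 := map_one _
lemma swap_X : swapUV PowerSeries.X = PowerSeries.X := PowerSeries.map_X fsw
lemma swap_Cu : swapUV (PowerSeries.C (R := M) u) = PowerSeries.C (R := M) v := by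
  show PowerSeries.map fsw _ = _
  rw [PowerSeries.map_C]
  congr 1
  simp [fsw, u, v]
lemma swap_Cv : swapUV (PowerSeries.C (R := M) v) = PowerSeries.C (R := M) u := by
  show PowerSeries.map fsw _ = _
  rw [PowerSeries.map_C]
  congr 1
  simp [fsw, u, v]

lemma v0_mul (a b : PowerSeries M) : subV0 (a * b) = subV0 a * subV0 b := map_mul _ a b
lemma v0_sub (a b : PowerSeries M) : subV0 (a - b) = subV0 a - subV0 b := map_sub _ a b
lemma v0_add (a b : PowerSeries M) : subV0 (a + b) = subV0 a + subV0 b := map_add _ a b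
lemma v0_one : subV0 1 = 1 := map_one _
lemma v0_X : subV0 PowerSeries.X = PowerSeries.X := PowerSeries.map_X fv0
lemma v0_Cu : subV0 (PowerSeries.C (R := M) u) = PowerSeries.C (R := M) u := by
  show PowerSeries.map fv0 _ = _
  rw [PowerSeries.map_C]
  congr 1
  simp [fv0, u]

lemma v0'_mul (a b : PowerSeries M) : subV0' (a * b) = subV0' a * subV0' b := map_mul _ a b
lemma v0'_sub (a b : PowerSeries M) : subV0' (a - b) = subV0' a - subV0' b := map_sub _ a b
lemma v0'_add (a b : PowerSeries M) : subV0' (a + b) = subV0' a + subV0' b := map_add _ a b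
lemma v0'_one : subV0' 1 = 1 := map_one _
lemma v0'_X : subV0' PowerSeries.X = PowerSeries.X := PowerSeries.map_X fv0'
lemma v0'_Cu : subV0' (PowerSeries.C (R := M) u) = PowerSeries.C (R := M) v := by
  show PowerSeries.map fv0' _ = _
  rw [PowerSeries.map_C]
  congr 1
  simp [fv0', u, v]

lemma hcuv : (PowerSeries.C (R := M) u * PowerSeries.C (R := M) v : PowerSeries M) ≠ 0 := by
  rw [← map_mul]
  intro h
  have h2 : u * v = 0 := PowerSeries.C_injective (by simpa using h)
  exact (mul_ne_zero (MvPolynomial.X_ne_zero 0) (MvPolynomial.X_ne_zero 1)) h2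

end LamAux

open LamAux in
theorem Lam_symmetry (H G : PowerSeries M)
    (hsym : swapUV H = H)
    (hG : PowerSeries.C (R := M) u * G
        = PowerSeries.C (R := M) (1 + u) * (1 + PowerSeries.X * PowerSeries.C (R := M) u) * (H - subU0 H)) :
    (swapUV G = G ↔ SymRel H) ∧ (SymRel H → SymRel G) := by
  have hUB : subU0 H = subV0' H := by rw [s1, hsym]
  rw [hUB, map_add, map_one] at hG
  -- hG : C u * G = (1 + C u) * (1 + X * C u) * (H - subV0' H)
  have h2 : PowerSeries.C (R := M) v * swapUV G
      = (1 + PowerSeries.C (R := M) v) * (1 + PowerSeries.X * PowerSeries.C (R := M) v)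
        * (H - subV0 H) := by
    have h := congrArg swapUV hG
    rw [swap_mul, swap_mul, swap_mul, swap_add, swap_add, swap_sub, swap_one, swap_mul,
      swap_X, swap_Cu, hsym, s2] at h
    exact h
  have hA : PowerSeries.C (R := M) u * subV0 G
      = (1 + PowerSeries.C (R := M) u) * (1 + PowerSeries.X * PowerSeries.C (R := M) u)
        * (subV0 H - subV0' (subV0' H)) := by
    have h := congrArg subV0 hG
    rw [v0_mul, v0_mul, v0_mul, v0_add, v0_add, v0_sub, v0_one, v0_mul,
      v0_X, v0_Cu, s3] at h
    exact h
  have hB : PowerSeries.C (R := M) v * subV0' G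
      = (1 + PowerSeries.C (R := M) v) * (1 + PowerSeries.X * PowerSeries.C (R := M) v)
        * (subV0' H - subV0' (subV0' H)) := by
    have h := congrArg subV0' hG
    rw [v0'_mul, v0'_mul, v0'_mul, v0'_add, v0'_add, v0'_sub, v0'_one, v0'_mul,
      v0'_X, v0'_Cu] at h
    exact h
  constructor
  · constructor
    · intro h
      rw [h] at h2
      unfold SymRel
      simp only [map_sub, map_mul, map_add, map_one]
      linear_combination (PowerSeries.C (R := M) v) * hG - (PowerSeries.C (R := M) u) * h2
    · intro hS
      unfold SymRel at hS
      simp only [map_sub, map_mul, map_add, map_one] at hS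
      apply mul_left_cancel₀ hcuv
      linear_combination (PowerSeries.C (R := M) u) * h2 - (PowerSeries.C (R := M) v) * hG + hS
  · intro hS
    unfold SymRel at hS ⊢
    simp only [map_sub, map_mul, map_add, map_one] at hS ⊢
    apply mul_left_cancel₀ hcuv
    linear_combination
      ((PowerSeries.C (R := M) v) * (PowerSeries.C (R := M) u - PowerSeries.C (R := M) v)
        * (1 - PowerSeries.X * (PowerSeries.C (R := M) u * PowerSeries.C (R := M) v))) * hG
      - ((PowerSeries.C (R := M) u * PowerSeries.C (R := M) v) * (1 + PowerSeries.C (R := M) v)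
        * (1 + PowerSeries.X * PowerSeries.C (R := M) v)) * hA
      + ((PowerSeries.C (R := M) u * PowerSeries.C (R := M) v) * (1 + PowerSeries.C (R := M) u)
        * (1 + PowerSeries.X * PowerSeries.C (R := M) u)) * hB
      + ((PowerSeries.C (R := M) v) * (1 + PowerSeries.C (R := M) u)
        * (1 + PowerSeries.X * PowerSeries.C (R := M) u)) * hS

end
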